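/- For every even integer ℓ ≥ 2, there exists a palindrome of length ℓ over the binary alphabet {0,1} whose critical exponent is exactly 2 (it contains a square but contains no factor of length p with period q satisfying p/q > 2). -/

import Mathlib

def tm : ℕ → Bool
  | 0 => false
  | (n+1) => (((n+1) % 2 == 1)).xor (tm ((n+1)/2))
decreasing_by exact Nat.div_lt_self (Nat.succ_pos n) one_lt_two

lemma tm_two (n : ℕ) : tm (2*n) = tm n := by
  cases n with
  | zero => rfl
  | succ m =>
    rw [show 2*(m+1) = (2*m+1)+1 by ring, tm]
    have h1 : (2*m+1+1) % 2 = 0 := by omega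
    have h2 : (2*m+1+1) / 2 = m+1 := by omega
    rw [h1, h2]
    simp

lemma tm_odd (n : ℕ) : tm (2*n+1) = !(tm n) := by
  rw [show 2*n+1 = (2*n)+1 by ring, tm]
  have h1 : (2*n+1) % 2 = 1 := by omega
  have h2 : (2*n+1) / 2 = n := by omega
  rw [h1, h2]
  simp [Bool.xor_comm]

lemma tm_pair_odd {k : ℕ} (h : tm k = tm (k+1)) : k % 2 = 1 := by
  rcases Nat.even_or_odd k with ⟨a, rfl⟩ | ho
  · rw [show a+a = 2*a by ring] at h
    rw [show 2*a+1 = 2*a+1 by rfl, tm_odd] at h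
    rw [tm_two] at h
    simp at h
  · obtain ⟨a, rfl⟩ := ho
    omega


lemma tm_no_overlap : ∀ q, 1 ≤ q → ∀ i, ¬ (∀ j ≤ q, tm (i+j) = tm (i+j+q)) := by
  intro q
  induction q using Nat.strong_induction_on with
  | _ q ih =>
    intro hq i H
    rcases Nat.even_or_odd q with ⟨q', rfl⟩ | ⟨r, rfl⟩
    · have hq' : 1 ≤ q' := by omega
      rcases Nat.even_or_odd i with ⟨a, rfl⟩ | ⟨a, rfl⟩
      · refine ih q' (by omega) hq' a (fun j hj => ?_)
        have := H (2*j) (by omega)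
        rw [show a+a+2*j = 2*(a+j) by ring,
            show 2*(a+j)+(q'+q') = 2*(a+j+q') by ring, tm_two, tm_two] at this
        exact this
      · refine ih q' (by omega) hq' a (fun j hj => ?_)
        have := H (2*j) (by omega)
        rw [show 2*a+1+2*j = 2*(a+j)+1 by ring,
            show 2*(a+j)+1+(q'+q') = 2*(a+j+q')+1 by ring, tm_odd, tm_odd] at this
        simpa using this
    · rcases Nat.eq_zero_or_pos r with rfl | hr
      · have h0 := H 0 (by omega)
        have h1 := H 1 (by omega)
        simp only [Nat.add_zero, Nat.mul_zero, Nat.zero_add] at h0 h1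
        have o0 : i % 2 = 1 := tm_pair_odd h0
        have o1 : (i+1) % 2 = 1 := tm_pair_odd (by rw [show i+1+1 = i+2 by ring]; exact h1)
        omega
      · rcases Nat.even_or_odd i with ⟨a, rfl⟩ | ⟨a, rfl⟩
        · have e0 := H 0 (by omega)
          have e1 := H 1 (by omega)
          have e2 := H 2 (by omega)
          have e3 := H 3 (by omega)
          rw [show a+a+0 = 2*a by ring, show 2*a+(2*r+1) = 2*(a+r)+1 by ring,
              tm_two, tm_odd] at e0
          rw [show a+a+1 = 2*a+1 by ring, show 2*a+1+(2*r+1) = 2*(a+r+1) by ring,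
              tm_odd, tm_two] at e1
          rw [show a+a+2 = 2*(a+1) by ring, show 2*(a+1)+(2*r+1) = 2*(a+r+1)+1 by ring,
              tm_two, tm_odd] at e2
          rw [show a+a+3 = 2*(a+1)+1 by ring, show 2*(a+1)+1+(2*r+1) = 2*(a+r+2) by ring,
              tm_odd, tm_two] at e3
          have p1 : (a+r) % 2 = 1 := by
            apply tm_pair_odd
            show tm (a+r) = tm (a+r+1)
            rw [← e1, e0]
            simp
          have p2 : (a+r+1) % 2 = 1 := by
            apply tm_pair_odd
            show tm (a+r+1) = tm (a+r+2)
            rw [← e3, e2]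
            simp
          omega
        · have e0 := H 0 (by omega)
          have e1 := H 1 (by omega)
          have e2 := H 2 (by omega)
          have e3 := H 3 (by omega)
          rw [show 2*a+1+0 = 2*a+1 by ring, show 2*a+1+(2*r+1) = 2*(a+r+1) by ring,
              tm_odd, tm_two] at e0
          rw [show 2*a+1+1 = 2*(a+1) by ring, show 2*(a+1)+(2*r+1) = 2*(a+r+1)+1 by ring,
              tm_two, tm_odd] at e1
          rw [show 2*a+1+2 = 2*(a+1)+1 by ring, show 2*(a+1)+1+(2*r+1) = 2*(a+r+2) by ring,
              tm_odd, tm_two] at e2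
          rw [show 2*a+1+3 = 2*(a+2) by ring, show 2*(a+2)+(2*r+1) = 2*(a+r+2)+1 by ring,
              tm_two, tm_odd] at e3
          have p1 : a % 2 = 1 := by
            apply tm_pair_odd
            rw [e1, ← e0]
            simp
          have p2 : (a+1) % 2 = 1 := by
            apply tm_pair_odd
            show tm (a+1) = tm (a+2)
            rw [e3, ← e2]
            simp
          omega

lemma tm_four0 (a : ℕ) : tm (4*a) = tm a := by
  rw [show 4*a = 2*(2*a) by ring, tm_two, tm_two]
lemma tm_four1 (a : ℕ) : tm (4*a+1) = !(tm a) := by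
  rw [show 4*a+1 = 2*(2*a)+1 by ring, tm_odd, tm_two]
lemma tm_four2 (a : ℕ) : tm (4*a+2) = !(tm a) := by
  rw [show 4*a+2 = 2*(2*a+1) by ring, tm_two, tm_odd]
lemma tm_four3 (a : ℕ) : tm (4*a+3) = tm a := by
  rw [show 4*a+3 = 2*(2*a+1)+1 by ring, tm_odd, tm_odd, Bool.not_not]

lemma tm0 : tm 0 = false := by rw [tm]
lemma tm1 : tm 1 = true := by rw [show 1 = 2*0+1 by rfl, tm_odd, tm0]; rfl
lemma tm2 : tm 2 = true := by rw [show 2 = 2*1 by rfl, tm_two, tm1]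
lemma tm3 : tm 3 = false := by rw [show 3 = 2*1+1 by rfl, tm_odd, tm1]; rfl
lemma tm4 : tm 4 = true := by rw [show 4 = 2*2 by rfl, tm_two, tm2]
lemma tm5 : tm 5 = false := by rw [show 5 = 2*2+1 by rfl, tm_odd, tm2]; rfl
lemma tm6 : tm 6 = false := by rw [show 6 = 2*3 by rfl, tm_two, tm3]
lemma tm7 : tm 7 = true := by rw [show 7 = 2*3+1 by rfl, tm_odd, tm3]; rfl

lemma tm_refl : ∀ j : ℕ, ∀ k < 2 * 4^j, tm (6 * 4^j - 1 - k) = tm k := by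
  intro j
  induction j with
  | zero =>
    intro k hk
    interval_cases k
    · simpa using tm5.trans tm0.symm
    · simpa using tm4.trans tm1.symm
  | succ j ih =>
    intro k hk
    have hN : 1 ≤ 4^j := Nat.one_le_pow _ _ (by norm_num)
    have h4 : 4^(j+1) = 4*4^j := by ring
    rw [h4] at hk
    set a := k / 4 with ha
    set r := k % 4 with hr
    have hk4 : k = 4*a + r := by omega
    have hr4 : r < 4 := by omega
    have haN : a < 2 * 4^j := by omega
    have hb : tm (6 * 4^j - 1 - a) = tm a := ih a haN
    set b := 6 * 4^j - 1 - a with hbdef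
    have hidx : 6 * 4^(j+1) - 1 - k = 4*b + (3 - r) := by
      have : b = 6 * 4^j - 1 - a := hbdef
      rw [h4] at *
      omega
    rw [hidx, hk4]
    interval_cases r
    · simpa using (tm_four3 b).trans (hb.trans (tm_four0 a).symm)
    · simpa using (tm_four2 b).trans (congrArg (!·) hb |>.trans (tm_four1 a).symm)
    · simpa using (tm_four1 b).trans (congrArg (!·) hb |>.trans (tm_four2 a).symm)
    · simpa using (tm_four0 b).trans (hb.trans (tm_four3 a).symm)

lemma tm_copy : ∀ j : ℕ, ∀ s < 2 * 4^j, tm (6 * 4^j + s) = tm s := by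
  intro j
  induction j with
  | zero =>
    intro s hs
    interval_cases s
    · simpa using tm6.trans tm0.symm
    · simpa using tm7.trans tm1.symm
  | succ j ih =>
    intro s hs
    have hN : 1 ≤ 4^j := Nat.one_le_pow _ _ (by norm_num)
    have h4 : 4^(j+1) = 4*4^j := by ring
    rw [h4] at hs
    set a := s / 4 with ha
    set r := s % 4 with hr
    have hs4 : s = 4*a + r := by omega
    have hr4 : r < 4 := by omega
    have haN : a < 2 * 4^j := by omega
    have hb : tm (6 * 4^j + a) = tm a := ih a haN
    have hidx : 6 * 4^(j+1) + s = 4*(6 * 4^j + a) + r := by rw [h4]; omega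
    rw [hidx, hs4]
    interval_cases r
    · simpa using (tm_four0 _).trans (hb.trans (tm_four0 a).symm)
    · simpa using (tm_four1 _).trans (congrArg (!·) hb |>.trans (tm_four1 a).symm)
    · simpa using (tm_four2 _).trans (congrArg (!·) hb |>.trans (tm_four2 a).symm)
    · simpa using (tm_four3 _).trans (hb.trans (tm_four3 a).symm)

/-- A word `x` has period `q` (with `1 ≤ q ≤ |x|`) if `x[i] = x[i+q]`
whenever both indices are in range. -/
def HasPeriod {A : Type*} (x : List A) (q : ℕ) : Prop :=
  1 ≤ q ∧ q ≤ x.length ∧ ∀ i : ℕ, i + q < x.length → x[i]? = x[i + q]?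

/-- `w` contains an `e`-power: a nonempty factor of length `p` with period `q`
and `p/q ≥ e`. -/
def ContainsPowGe {A : Type*} (w : List A) (e : ℚ) : Prop :=
  ∃ x : List A, ∃ q : ℕ, x ≠ [] ∧ x <:+: w ∧ HasPeriod x q ∧
    e ≤ (x.length : ℚ) / (q : ℚ)

/-- `w` contains an `e⁺`-power: a nonempty factor of length `p` with period `q`
and `p/q > e`. -/
def ContainsPowGt {A : Type*} (w : List A) (e : ℚ) : Prop :=
  ∃ x : List A, ∃ q : ℕ, x ≠ [] ∧ x <:+: w ∧ HasPeriod x q ∧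
    e < (x.length : ℚ) / (q : ℚ)

/-- The critical exponent of `w` is exactly `e`: some nonempty factor has
exponent at least `e`, and no nonempty factor has exponent exceeding `e`. -/
def CritExpIs {A : Type*} (w : List A) (e : ℚ) : Prop :=
  ContainsPowGe w e ∧ ¬ ContainsPowGt w e

theorem exists_even_binary_palindrome_critexp_two (ℓ : ℕ)
    (heven : Even ℓ) (hlen : 2 ≤ ℓ) :
    ∃ w : List (Fin 2), w.length = ℓ ∧ w.reverse = w ∧
      (∃ y : List (Fin 2), y ≠ [] ∧ y ++ y <:+: w) ∧
      ¬ ContainsPowGt w 2 := by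
  obtain ⟨m, rfl⟩ := heven
  have hm : 1 ≤ m := by omega
  have hN : m < 4^m := Nat.lt_pow_self (n := m) (by norm_num)
  set N := 4^m with hNdef
  set start := 6*N - m with hstart
  set f : ℕ → Fin 2 := fun n => if tm n then 1 else 0 with hf
  set w : List (Fin 2) := (List.range (m+m)).map (fun x => f (start + x)) with hw
  have hwlen : w.length = m + m := by simp [hw]
  have hval : ∀ x, x < m+m → tm (start + x) = tm (if x < m then m-1-x else x-m) := by
    intro x hx
    by_cases hxm : x < m
    · have h1 : start + x = 6*N - 1 - (m-1-x) := by omega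
      rw [if_pos hxm, h1]
      exact tm_refl m (m-1-x) (by omega)
    · have h1 : start + x = 6*N + (x - m) := by omega
      rw [if_neg hxm, h1]
      exact tm_copy m (x-m) (by omega)
  have hgetw : ∀ k, (hk : k < w.length) → w[k] = f (start + k) := by
    intro k hk
    simp [hw]
  have hcent : ∀ k, k < m + m → w[k]? = some (f (start + k)) := by
    intro k hk
    simp [hw, List.getElem?_map, List.getElem?_range, hk]
  refine ⟨w, by omega, ?_, ?_, ?_⟩
  · -- palindrome
    apply List.ext_getElem (by simp)
    intro i h1 h2
    rw [List.getElem_reverse]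
    rw [hgetw, hgetw]
    simp only [hwlen]
    rw [hwlen] at h2
    have h3 : m + m - 1 - i < m + m := by omega
    have e1 := hval i h2
    have e2 := hval (m+m-1-i) h3
    have : tm (start + (m+m-1-i)) = tm (start + i) := by
      rw [e1, e2]
      congr 1
      split_ifs <;> omega
    simp only [hf]
    rw [this]
  · -- contains a square
    have h1 : m - 1 < w.length := by rw [hwlen]; omega
    have h2 : m < w.length := by rw [hwlen]; omega
    have hmm : m - 1 + 1 = m := by omega
    refine ⟨[w[m-1]'h1], by simp, w.take (m-1), w.drop (m+1), ?_⟩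
    have hd1 : w.drop (m-1) = w[m-1]'h1 :: w.drop m := by
      rw [List.drop_eq_getElem_cons h1, hmm]
    have hd2 : w.drop m = w[m]'h2 :: w.drop (m+1) := List.drop_eq_getElem_cons h2
    have hcc : w[m]'h2 = w[m-1]'h1 := by
      rw [hgetw, hgetw]
      have e1 := hval (m-1) (by omega)
      have e2 := hval m (by omega)
      rw [if_pos (by omega)] at e1
      rw [if_neg (by omega)] at e2
      simp only [hf]
      rw [e1, e2]
      have h0 : m - m = 0 := by omega
      have h0' : m - 1 - (m-1) = 0 := by omega
      rw [h0, h0']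
    conv_rhs => rw [← List.take_append_drop (m-1) w, hd1, hd2, hcc]
    simp
  · -- overlap-free
    rintro ⟨x, q, hne, hinf, ⟨hq1, hqle, hper⟩, hgt⟩
    have hq0 : (0:ℚ) < (q:ℚ) := by exact_mod_cast hq1
    rw [lt_div_iff₀ hq0] at hgt
    have h2q : 2*q < x.length := by exact_mod_cast hgt
    obtain ⟨s, u, hsu⟩ := hinf
    have hlen2 : s.length + x.length + u.length = m+m := by
      have := congrArg List.length hsu
      simp [hwlen] at this
      omega
    have wx : ∀ k, k < x.length → w[s.length + k]? = x[k]? := by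
      intro k hk
      rw [← hsu, List.append_assoc,
        List.getElem?_append_right (by omega : s.length ≤ s.length + k),
        Nat.add_sub_cancel_left, List.getElem?_append_left hk]
    apply tm_no_overlap q hq1 (start + s.length)
    intro j hj
    have hjq : j + q < x.length := by omega
    have hx := hper j hjq
    have e1 := wx j (by omega)
    have e2 := wx (j+q) (by omega)
    have ew : w[s.length + j]? = w[s.length + (j+q)]? := by
      rw [e1, e2, hx]
    rw [hcent _ (by omega), hcent _ (by omega)] at ew
    have hfeq : f (start + (s.length + j)) = f (start + (s.length + (j+q))) :=
      Option.some.inj ew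
    have : tm (start + (s.length + j)) = tm (start + (s.length + (j+q))) := by
      by_contra hcon
      simp only [hf] at hfeq
      cases h1 : tm (start + (s.length + j)) <;>
        cases h2 : tm (start + (s.length + (j+q))) <;>
          rw [h1, h2] at hfeq <;> simp_all
    have i1 : start + s.length + j = start + (s.length + j) := by omega
    have i2 : start + s.length + j + q = start + (s.length + (j+q)) := by omega
    rw [i2, i1]
    exact this
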